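/- The Dirichlet density integrates to one; equivalently, the multivariate Beta integral holds: ∫_S ∏_{i=0}^{K−1} p_i(x)^{α_i − 1} dx = (∏_{i=0}^{K−1} Γ(α_i)) / Γ(α₀), where the integral is with respect to Lebesgue measure on ℝ^{K−1}. -/

import Mathlib

open Real MeasureTheory

/-- The open simplex `S ⊆ ℝ^{K-1}`: all coordinates positive and summing to less than 1. -/
def dirSimplex (K : ℕ) : Set (Fin (K - 1) → ℝ) :=
  {x | (∀ i, 0 < x i) ∧ ∑ i, x i < 1}

/-- The probability vector `p(x) ∈ ℝ^K` associated to `x ∈ ℝ^{K-1}`: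
`pᵢ(x) = xᵢ` for `i < K - 1` and `p_{K-1}(x) = 1 - ∑_{i<K-1} xᵢ`. -/
noncomputable def probVec (K : ℕ) (x : Fin (K - 1) → ℝ) (i : Fin K) : ℝ :=
  if h : (i : ℕ) < K - 1 then x ⟨i, h⟩ else 1 - ∑ j, x j

/-- The Dirichlet density `f_α(x) = (Γ(α₀) / ∏ᵢ Γ(αᵢ)) ∏ᵢ pᵢ(x)^{αᵢ - 1}` (on the simplex). -/
noncomputable def dirDensity {K : ℕ} (α : Fin K → ℝ) (x : Fin (K - 1) → ℝ) : ℝ :=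
  (Real.Gamma (∑ i, α i) / ∏ i, Real.Gamma (α i)) * ∏ i, probVec K x i ^ (α i - 1)

/-- Dirichlet expectation `E_α[g] = ∫_S g(p(x)) f_α(x) dx` (Lebesgue measure on `ℝ^{K-1}`). -/
noncomputable def dirE {K : ℕ} (α : Fin K → ℝ) (g : (Fin K → ℝ) → ℝ) : ℝ :=
  ∫ x in dirSimplex K, g (probVec K x) * dirDensity α x

/-- The digamma function: the derivative of `log ∘ Γ`. -/
noncomputable def digamma (t : ℝ) : ℝ := deriv (fun s => Real.log (Real.Gamma s)) t

/-- The trigamma function: the second derivative of `log ∘ Γ`. -/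
noncomputable def trigamma (t : ℝ) : ℝ := deriv (deriv (fun s => Real.log (Real.Gamma s))) t

/-- The rising factorial `z^{(n)} = z (z+1) ⋯ (z+n-1)`. -/
noncomputable def risingFac (z : ℝ) (n : ℕ) : ℝ := ∏ k ∈ Finset.range n, (z + (k : ℝ))

section DirichletAux
open intervalIntegral
open scoped ENNReal


lemma real_beta_scaled {a b c : ℝ} (ha : 0 < a) (hb : 0 < b) (hc : 0 < c) :
    ∫ t in (0:ℝ)..c, t ^ (a - 1) * (c - t) ^ (b - 1) =
      c ^ (a + b - 1) * (Real.Gamma a * Real.Gamma b / Real.Gamma (a + b)) := by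
  have hC : ∫ x in (0:ℝ)..c, (x : ℂ) ^ ((a:ℂ) - 1) * ((c : ℂ) - x) ^ ((b:ℂ) - 1) =
      (c : ℂ) ^ ((a:ℂ) + b - 1) * Complex.betaIntegral a b :=
    Complex.betaIntegral_scaled a b hc
  have hβ : Complex.betaIntegral a b =
      (Real.Gamma a : ℂ) * Real.Gamma b / Real.Gamma (a + b) := by
    have h := Complex.Gamma_mul_Gamma_eq_betaIntegral (s := (a:ℂ)) (t := (b:ℂ))
      (by simpa using ha) (by simpa using hb)
    have hne : Complex.Gamma ((a:ℂ) + b) ≠ 0 := by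
      rw [show ((a:ℂ) + b) = ((a + b : ℝ) : ℂ) by push_cast; ring, Complex.Gamma_ofReal]
      exact_mod_cast (Real.Gamma_pos_of_pos (by positivity)).ne'
    have hne' : (Real.Gamma (a + b) : ℂ) ≠ 0 := by
      exact_mod_cast (Real.Gamma_pos_of_pos (show (0:ℝ) < a + b by positivity)).ne'
    rw [eq_div_iff hne', ← Complex.Gamma_ofReal a, ← Complex.Gamma_ofReal b,
      ← Complex.Gamma_ofReal (a + b), Complex.ofReal_add]
    rw [h]; ring
  -- rewrite LHS of hC as ofReal of real integral
  have hcong : ∫ x in (0:ℝ)..c, (x : ℂ) ^ ((a:ℂ) - 1) * ((c : ℂ) - x) ^ ((b:ℂ) - 1) =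
      ((∫ t in (0:ℝ)..c, t ^ (a - 1) * (c - t) ^ (b - 1) : ℝ) : ℂ) := by
    rw [← intervalIntegral.integral_ofReal]
    apply intervalIntegral.integral_congr
    intro x hx
    rw [Set.uIcc_of_le hc.le] at hx
    have hx0 : (0:ℝ) ≤ x := hx.1
    have hxc : x ≤ c := hx.2
    show (x : ℂ) ^ ((a:ℂ) - 1) * ((c : ℂ) - x) ^ ((b:ℂ) - 1)
        = ((x ^ (a - 1) * (c - x) ^ (b - 1) : ℝ) : ℂ)
    rw [Complex.ofReal_mul, Complex.ofReal_cpow hx0, Complex.ofReal_cpow (show (0:ℝ) ≤ c - x by linarith)]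
    push_cast
    ring
  rw [hcong, hβ] at hC
  have : ((c:ℂ) ^ ((a:ℂ) + b - 1)) = ((c ^ (a + b - 1) : ℝ) : ℂ) := by
    rw [Complex.ofReal_cpow hc.le]; push_cast; ring_nf
  rw [this] at hC
  have := hC
  exact_mod_cast this

lemma real_beta_integrable {a b c : ℝ} (ha : 0 < a) (hb : 0 < b) (hc : 0 < c) :
    IntervalIntegrable (fun t => t ^ (a - 1) * (c - t) ^ (b - 1)) volume 0 c := by
  have h1 : IntervalIntegrable (fun t => t ^ (a - 1) * (c - t) ^ (b - 1)) volume 0 (c/2) := by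
    apply IntervalIntegrable.mul_continuousOn
    · exact intervalIntegrable_rpow' (by linarith)
    · apply ContinuousOn.rpow_const
      · exact (continuous_const.sub continuous_id).continuousOn
      · intro x hx
        rw [Set.uIcc_of_le (by linarith)] at hx
        left; have := hx.2; intro h; nlinarith [sub_eq_zero.mp h]
  have h2 : IntervalIntegrable (fun t => t ^ (a - 1) * (c - t) ^ (b - 1)) volume (c/2) c := by
    apply IntervalIntegrable.continuousOn_mul
    · have : IntervalIntegrable (fun x : ℝ => x ^ (b - 1)) volume 0 (c/2) :=
        intervalIntegrable_rpow' (by linarith)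
      have h3 := (this.comp_sub_left c).symm
      rw [show c - c/2 = c/2 by ring, sub_zero] at h3
      exact h3
    · apply ContinuousOn.rpow_const continuous_id.continuousOn
      intro x hx
      rw [Set.uIcc_of_le (by linarith)] at hx
      left; show id x ≠ 0; simp only [id_eq]; exact ne_of_gt (by linarith [hx.1])
  exact h1.trans h2

lemma inner_lintegral {a b c : ℝ} (ha : 0 < a) (hb : 0 < b) (hc : 0 < c) :
    ∫⁻ t in Set.Ioo (0:ℝ) c, ENNReal.ofReal (t ^ (a - 1)) * ENNReal.ofReal ((c - t) ^ (b - 1)) =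
      ENNReal.ofReal (c ^ (a + b - 1) * (Real.Gamma a * Real.Gamma b / Real.Gamma (a + b))) := by
  have hint : IntegrableOn (fun t => t ^ (a - 1) * (c - t) ^ (b - 1)) (Set.Ioo 0 c) volume :=
    (real_beta_integrable ha hb hc).1.mono_set Set.Ioo_subset_Ioc_self
  have hnn : 0 ≤ᵐ[volume.restrict (Set.Ioo 0 c)] fun t => t ^ (a - 1) * (c - t) ^ (b - 1) := by
    filter_upwards [ae_restrict_mem measurableSet_Ioo] with t ht
    have h1 : (0:ℝ) ≤ t := ht.1.le
    have h2 : (0:ℝ) ≤ c - t := by linarith [ht.2]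
    positivity
  calc ∫⁻ t in Set.Ioo (0:ℝ) c,
        ENNReal.ofReal (t ^ (a - 1)) * ENNReal.ofReal ((c - t) ^ (b - 1))
      = ∫⁻ t in Set.Ioo (0:ℝ) c, ENNReal.ofReal (t ^ (a - 1) * (c - t) ^ (b - 1)) := by
        apply setLIntegral_congr_fun measurableSet_Ioo
        intro t ht
        beta_reduce
        rw [ENNReal.ofReal_mul (Real.rpow_nonneg ht.1.le _)]
    _ = ENNReal.ofReal (∫ t in Set.Ioo (0:ℝ) c, t ^ (a - 1) * (c - t) ^ (b - 1)) :=
        (ofReal_integral_eq_lintegral_ofReal hint hnn).symm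
    _ = ENNReal.ofReal (c ^ (a + b - 1) * (Real.Gamma a * Real.Gamma b / Real.Gamma (a + b))) := by
        rw [← integral_Ioc_eq_integral_Ioo, ← intervalIntegral.integral_of_le hc.le,
          real_beta_scaled ha hb hc]

open scoped ENNReal

/-- open simplex in `ℝ^K` coordinates -/
def pset (K : ℕ) : Set (Fin K → ℝ) := {x | (∀ i, 0 < x i) ∧ ∑ i, x i < 1}

noncomputable def pv (K : ℕ) (x : Fin K → ℝ) (i : Fin (K + 1)) : ℝ :=
  if h : (i : ℕ) < K then x ⟨i, h⟩ else 1 - ∑ j, x j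

lemma pset_meas (K : ℕ) : MeasurableSet (pset K) := by
  have : pset K = (⋂ i, {x : Fin K → ℝ | 0 < x i}) ∩ {x | ∑ i, x i < 1} := by
    ext x; simp [pset]
  rw [this]
  exact (MeasurableSet.iInter fun i =>
      measurableSet_lt measurable_const (measurable_pi_apply i)).inter
    (measurableSet_lt (Finset.measurable_sum _ fun i _ => measurable_pi_apply i)
      measurable_const)

lemma pv_meas (K : ℕ) (i : Fin (K + 1)) : Measurable fun x => pv K x i := by
  by_cases h : (i : ℕ) < K
  · simp only [pv, dif_pos h]; exact measurable_pi_apply _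
  · simp only [pv, dif_neg h]
    exact measurable_const.sub (Finset.measurable_sum _ fun j _ => measurable_pi_apply j)

lemma F_meas (K : ℕ) (α : Fin (K + 1) → ℝ) :
    Measurable fun x => ∏ i, ENNReal.ofReal (pv K x i ^ (α i - 1)) :=
  Finset.measurable_prod _ fun i _ =>
    (ENNReal.measurable_ofReal.comp ((pv_meas K i).pow_const _))

lemma pv_snoc_castSucc {K : ℕ} (y : Fin K → ℝ) (t : ℝ) (j : Fin (K + 1)) :
    pv (K + 1) (Fin.snoc y t) j.castSucc = (Fin.snoc y t : Fin (K + 1) → ℝ) j := by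
  have h : ((j.castSucc : Fin (K + 2)) : ℕ) < K + 1 := j.isLt
  simp only [pv, dif_pos h]
  have he : (⟨((j.castSucc : Fin (K + 2)) : ℕ), h⟩ : Fin (K + 1)) = j := Fin.ext rfl
  rw [he]

lemma pv_snoc_last {K : ℕ} (y : Fin K → ℝ) (t : ℝ) :
    pv (K + 1) (Fin.snoc y t) (Fin.last (K + 1)) = 1 - (∑ j, y j + t) := by
  have h : ¬ ((Fin.last (K + 1) : Fin (K + 2)) : ℕ) < K + 1 := by simp
  simp only [pv, dif_neg h, Fin.sum_univ_castSucc, Fin.snoc_castSucc, Fin.snoc_last]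

lemma snoc_mem_pset_iff {K : ℕ} (y : Fin K → ℝ) (t : ℝ) :
    Fin.snoc y t ∈ pset (K + 1) ↔ y ∈ pset K ∧ t ∈ Set.Ioo 0 (1 - ∑ j, y j) := by
  have hsum : ∑ i, Fin.snoc y t i = ∑ j, y j + t := by
    simp [Fin.sum_univ_castSucc]
  constructor
  · rintro ⟨hpos, hlt⟩
    rw [hsum] at hlt
    have ht : 0 < t := by simpa using hpos (Fin.last K)
    have hy : ∀ j, 0 < y j := fun j => by simpa using hpos j.castSucc
    exact ⟨⟨hy, by linarith⟩, by constructor <;> [exact ht; linarith]⟩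
  · rintro ⟨⟨hy, _⟩, ht⟩
    refine ⟨fun i => ?_, by rw [hsum]; linarith [ht.2]⟩
    induction i using Fin.lastCases with
    | last => simpa using ht.1
    | cast j => simpa using hy j

lemma F_snoc {K : ℕ} (α : Fin (K + 2) → ℝ) (y : Fin K → ℝ) (t : ℝ) :
    (∏ i, ENNReal.ofReal (pv (K + 1) (Fin.snoc y t) i ^ (α i - 1))) =
      (∏ j : Fin K, ENNReal.ofReal (y j ^ (α j.castSucc.castSucc - 1))) *
        (ENNReal.ofReal (t ^ (α (Fin.last K).castSucc - 1)) *
          ENNReal.ofReal ((1 - (∑ j, y j + t)) ^ (α (Fin.last (K + 1)) - 1))) := by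
  have h1 : ∀ i : Fin K, pv (K + 1) (Fin.snoc y t) i.castSucc.castSucc = y i := fun i => by
    rw [pv_snoc_castSucc, Fin.snoc_castSucc]
  have h2 : pv (K + 1) (Fin.snoc y t) (Fin.last K).castSucc = t := by
    rw [pv_snoc_castSucc, Fin.snoc_last]
  rw [Fin.prod_univ_castSucc (n := K + 1), Fin.prod_univ_castSucc (n := K), pv_snoc_last]
  simp only [h1, h2]
  ring

lemma pv_lt {K : ℕ} (x : Fin K → ℝ) (i : Fin (K + 1)) (h : (i : ℕ) < K) :
    pv K x i = x ⟨i, h⟩ := dif_pos h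

lemma pv_last {K : ℕ} (x : Fin K → ℝ) :
    pv K x (Fin.last K) = 1 - ∑ j, x j := dif_neg (by simp)

lemma pv_castSucc {K : ℕ} (x : Fin K → ℝ) (j : Fin K) :
    pv K x j.castSucc = x j := by
  rw [pv_lt x j.castSucc j.isLt]
  exact congrArg x (Fin.ext rfl)

theorem dir_lintegral (K : ℕ) : ∀ (α : Fin (K + 1) → ℝ), (∀ i, 0 < α i) →
    (∫⁻ x in pset K, ∏ i, ENNReal.ofReal (pv K x i ^ (α i - 1))) =
      ENNReal.ofReal ((∏ i, Real.Gamma (α i)) / Real.Gamma (∑ i, α i)) := by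
  induction K with
  | zero =>
    intro α hα
    have hset : pset 0 = Set.univ := by
      ext x; simp [pset]
    have hpv : ∀ x : Fin 0 → ℝ, (∏ i, ENNReal.ofReal (pv 0 x i ^ (α i - 1))) = 1 := by
      intro x
      rw [Fin.prod_univ_one]
      have h0 : pv 0 x 0 = 1 := by simp [pv]
      rw [h0, Real.one_rpow, ENNReal.ofReal_one]
    rw [hset, Measure.restrict_univ, lintegral_congr hpv, lintegral_one]
    have hvol : (volume : Measure (Fin 0 → ℝ)) Set.univ = 1 := by
      rw [volume_pi, Measure.pi_univ]; simp
    rw [hvol, Fin.sum_univ_one, Fin.prod_univ_one,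
      div_self (Real.Gamma_pos_of_pos (hα 0)).ne', ENNReal.ofReal_one]
  | succ K IH =>
    intro α hα
    set F : (Fin (K + 1) → ℝ) → ℝ≥0∞ :=
      fun x => ∏ i, ENNReal.ofReal (pv (K + 1) x i ^ (α i - 1)) with hF_def
    set a := α (Fin.last K).castSucc with ha_def
    set b := α (Fin.last (K + 1)) with hb_def
    have ha : 0 < a := hα _
    have hb : 0 < b := hα _
    have hΓab : 0 < Real.Gamma (a + b) := Real.Gamma_pos_of_pos (by positivity)
    set Bc := Real.Gamma a * Real.Gamma b / Real.Gamma (a + b) with hBc_def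
    have hBc0 : 0 ≤ Bc := by positivity
    set β : Fin (K + 1) → ℝ :=
      Fin.snoc (fun j : Fin K => α j.castSucc.castSucc) (a + b) with hβ_def
    have hβc : ∀ j : Fin K, β j.castSucc = α j.castSucc.castSucc := by
      intro j; simp [hβ_def]
    have hβl : β (Fin.last K) = a + b := by simp [hβ_def]
    have hβpos : ∀ j, 0 < β j := by
      intro j
      induction j using Fin.lastCases with
      | last => rw [hβl]; positivity
      | cast j => rw [hβc]; exact hα _
    -- the equivalence
    set e := MeasurableEquiv.piFinSuccAbove (fun _ : Fin (K + 1) => ℝ) (Fin.last K) with he_def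
    have mp := measurePreserving_piFinSuccAbove (fun _ : Fin (K + 1) => (volume : Measure ℝ))
      (Fin.last K)
    have hesymm : ∀ p : ℝ × (Fin K → ℝ), e.symm p = Fin.snoc p.2 p.1 := by
      intro p
      rw [he_def, MeasurableEquiv.piFinSuccAbove_symm_apply]
      simp [Fin.insertNthEquiv, Fin.insertNth_last']
    have hFmeas : Measurable F := F_meas (K + 1) α
    have hG0meas : Measurable ((pset (K + 1)).indicator F) :=
      hFmeas.indicator (pset_meas _)
    -- inner integral
    have hinner : ∀ y : Fin K → ℝ,
        (∫⁻ t, (pset (K + 1)).indicator F (Fin.snoc y t)) =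
          (pset K).indicator (fun y => ENNReal.ofReal Bc *
            ∏ j, ENNReal.ofReal (pv K y j ^ (β j - 1))) y := by
      intro y
      by_cases hy : y ∈ pset K
      · have hc : 0 < 1 - ∑ j, y j := by linarith [hy.2]
        set c := 1 - ∑ j, y j with hc_def
        set P := ∏ j : Fin K, ENNReal.ofReal (y j ^ (α j.castSucc.castSucc - 1)) with hP_def
        have hPne : P ≠ ⊤ := (ENNReal.prod_lt_top fun _ _ => ENNReal.ofReal_lt_top).ne
        have hind : ∀ t, (pset (K + 1)).indicator F (Fin.snoc y t) =
            (Set.Ioo 0 c).indicator (fun t => F (Fin.snoc y t)) t := by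
          intro t
          by_cases ht : t ∈ Set.Ioo 0 c
          · rw [Set.indicator_of_mem ht,
              Set.indicator_of_mem ((snoc_mem_pset_iff y t).2 ⟨hy, ht⟩)]
          · rw [Set.indicator_of_notMem ht, Set.indicator_of_notMem
              (fun hmem => ht ((snoc_mem_pset_iff y t).1 hmem).2)]
        rw [lintegral_congr hind, lintegral_indicator measurableSet_Ioo]
        have hFs : ∀ t : ℝ, F (Fin.snoc y t) =
            P * (ENNReal.ofReal (t ^ (a - 1)) * ENNReal.ofReal ((c - t) ^ (b - 1))) := by
          intro t
          simp only [hF_def]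
          rw [F_snoc α y t]
          have : (1 - (∑ j, y j + t)) = c - t := by rw [hc_def]; ring
          rw [this]
        rw [lintegral_congr fun t => hFs t, lintegral_const_mul' P _ hPne,
          inner_lintegral ha hb hc, Set.indicator_of_mem hy]
        -- reorganize
        rw [Fin.prod_univ_castSucc (n := K)]
        have h1 : ∀ j : Fin K, pv K y j.castSucc = y j := pv_castSucc y
        have h2 : pv K y (Fin.last K) = c := pv_last y
        simp only [h1, h2, hβc, hβl]
        rw [ENNReal.ofReal_mul (by positivity : (0:ℝ) ≤ c ^ (a + b - 1))]
        ring
      · have h0 : ∀ t, (pset (K + 1)).indicator F (Fin.snoc y t) = 0 := fun t =>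
          Set.indicator_of_notMem
            (fun hmem => hy ((snoc_mem_pset_iff y t).1 hmem).1) _
        rw [lintegral_congr h0, lintegral_zero, Set.indicator_of_notMem hy]
    -- put it together
    have main : (∫⁻ x in pset (K + 1), F x) =
        ENNReal.ofReal Bc * ∫⁻ y in pset K, ∏ j, ENNReal.ofReal (pv K y j ^ (β j - 1)) := by
      rw [← lintegral_indicator (pset_meas _) F]
      rw [show (volume : Measure (Fin (K + 1) → ℝ)) = Measure.pi fun _ => volume from volume_pi]
      rw [← (MeasurePreserving.symm e mp).lintegral_comp_emb e.symm.measurableEmbedding]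
      rw [lintegral_prod_symm' (fun p : ℝ × (Fin K → ℝ) => (pset (K + 1)).indicator F (e.symm p)) (hG0meas.comp e.symm.measurable)]
      have : ∀ y : Fin K → ℝ, (∫⁻ t, (pset (K + 1)).indicator F (e.symm (t, y))) =
          (pset K).indicator (fun y => ENNReal.ofReal Bc *
            ∏ j, ENNReal.ofReal (pv K y j ^ (β j - 1))) y := by
        intro y
        rw [lintegral_congr fun t => by rw [hesymm (t, y)]]
        exact hinner y
      rw [lintegral_congr this]
      rw [lintegral_indicator (pset_meas K)]
      rw [← volume_pi]
      exact lintegral_const_mul' _ _ ENNReal.ofReal_ne_top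
    rw [main, IH β hβpos, ← ENNReal.ofReal_mul hBc0]
    congr 1
    -- algebra
    have hsum : ∑ j, β j = ∑ i, α i := by
      rw [Fin.sum_univ_castSucc (n := K), Fin.sum_univ_castSucc (n := K + 1),
        Fin.sum_univ_castSucc (n := K)]
      simp only [hβc, hβl]
      ring
    have hprodβ : (∏ j, Real.Gamma (β j)) =
        (∏ j : Fin K, Real.Gamma (α j.castSucc.castSucc)) * Real.Gamma (a + b) := by
      rw [Fin.prod_univ_castSucc (n := K)]
      simp only [hβc, hβl]
    have hprodα : (∏ i, Real.Gamma (α i)) =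
        ((∏ j : Fin K, Real.Gamma (α j.castSucc.castSucc)) * Real.Gamma a) * Real.Gamma b := by
      rw [Fin.prod_univ_castSucc (n := K + 1), Fin.prod_univ_castSucc (n := K)]
    have hΓsum : 0 < Real.Gamma (∑ i, α i) := by
      apply Real.Gamma_pos_of_pos
      exact Finset.sum_pos (fun i _ => hα i) Finset.univ_nonempty
    rw [hsum, hprodβ, hprodα, hBc_def]
    field_simp

lemma pv_pos {K : ℕ} {x : Fin K → ℝ} (hx : x ∈ pset K) (i : Fin (K + 1)) :
    0 < pv K x i := by
  by_cases h : (i : ℕ) < K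
  · rw [pv_lt x i h]; exact hx.1 _
  · rw [pv, dif_neg h]; linarith [hx.2]

theorem dir_final (n : ℕ) (α : Fin (n + 1) → ℝ) (hα : ∀ i, 0 < α i) :
    (∫ x in pset n, ∏ i, pv n x i ^ (α i - 1)) =
      (∏ i, Real.Gamma (α i)) / Real.Gamma (∑ i, α i) := by
  have hmeas : Measurable fun x : Fin n → ℝ => ∏ i, pv n x i ^ (α i - 1) :=
    Finset.measurable_prod _ fun i _ => (pv_meas n i).pow_const _
  have hnn : 0 ≤ᵐ[volume.restrict (pset n)] fun x => ∏ i, pv n x i ^ (α i - 1) := by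
    filter_upwards [ae_restrict_mem (pset_meas n)] with x hx
    exact Finset.prod_nonneg fun i _ => (Real.rpow_pos_of_pos (pv_pos hx i) _).le
  rw [integral_eq_lintegral_of_nonneg_ae hnn hmeas.aestronglyMeasurable]
  have hcong : (∫⁻ x in pset n, ENNReal.ofReal (∏ i, pv n x i ^ (α i - 1))) =
      ∫⁻ x in pset n, ∏ i, ENNReal.ofReal (pv n x i ^ (α i - 1)) := by
    apply setLIntegral_congr_fun (pset_meas n)
    intro x hx
    exact ENNReal.ofReal_prod_of_nonneg fun i _ =>
      (Real.rpow_pos_of_pos (pv_pos hx i) _).le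
  rw [hcong, dir_lintegral n α hα, ENNReal.toReal_ofReal]
  apply div_nonneg
  · exact Finset.prod_nonneg fun i _ => (Real.Gamma_pos_of_pos (hα i)).le
  · exact (Real.Gamma_pos_of_pos (Finset.sum_pos (fun i _ => hα i) Finset.univ_nonempty)).le


end DirichletAux

/-- **The Dirichlet density integrates to one (multivariate Beta integral):**
`∫_S ∏ᵢ pᵢ(x)^{αᵢ-1} dx = (∏ᵢ Γ(αᵢ)) / Γ(α₀)`. -/
theorem dirichlet_beta_integral (K : ℕ) (hK : 1 ≤ K) (α : Fin K → ℝ)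
    (hα : ∀ i, 0 < α i) :
    (∫ x in dirSimplex K, ∏ i, probVec K x i ^ (α i - 1)) =
      (∏ i, Real.Gamma (α i)) / Real.Gamma (∑ i, α i) := by
  obtain ⟨n, rfl⟩ : ∃ n, K = n + 1 := ⟨K - 1, (Nat.succ_pred_eq_of_pos hK).symm⟩
  exact dir_final n α hα
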